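/- Jacobian of the congruence transformation on symmetric matrices: for an invertible n × n real matrix A, the linear map T ↦ Aᵀ T A on the real vector space of n × n symmetric matrices has determinant (det A)^{n+1}; in particular its absolute value is |det A|^{n+1}. -/

import Mathlib

open Matrix

private def congMap {n : ℕ} (A : Matrix (Fin n) (Fin n) ℝ) :
    selfAdjoint (Matrix (Fin n) (Fin n) ℝ) →ₗ[ℝ] selfAdjoint (Matrix (Fin n) (Fin n) ℝ) where
  toFun T := ⟨Aᵀ * (T : Matrix (Fin n) (Fin n) ℝ) * A, by
    have hT : _root_.IsSelfAdjoint (T : Matrix (Fin n) (Fin n) ℝ) := T.2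
    rw [selfAdjoint.mem_iff]
    simp only [_root_.IsSelfAdjoint, Matrix.star_eq_conjTranspose,
      Matrix.conjTranspose_eq_transpose_of_trivial] at hT ⊢
    simp [Matrix.transpose_mul, Matrix.mul_assoc, hT]⟩
  map_add' T S := by
    ext i j
    simp [Matrix.mul_add, Matrix.add_mul]
  map_smul' c T := by
    ext i j
    simp [Matrix.mul_smul, Matrix.smul_mul]

private lemma congMap_mul {n : ℕ} (A B : Matrix (Fin n) (Fin n) ℝ) :
    congMap (A * B) = (congMap B).comp (congMap A) := by
  apply LinearMap.ext
  intro T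
  apply Subtype.ext
  simp [congMap, Matrix.transpose_mul, Matrix.mul_assoc]

private lemma congMap_det_mul {n : ℕ} (A B : Matrix (Fin n) (Fin n) ℝ) :
    LinearMap.det (congMap (A * B)) = LinearMap.det (congMap A) * LinearMap.det (congMap B) := by
  rw [congMap_mul, LinearMap.det_comp, mul_comm]

private lemma symm_entry {n : ℕ} (T : selfAdjoint (Matrix (Fin n) (Fin n) ℝ)) (i j : Fin n) :
    (T : Matrix (Fin n) (Fin n) ℝ) j i = (T : Matrix (Fin n) (Fin n) ℝ) i j := by
  have hT : _root_.IsSelfAdjoint (T : Matrix (Fin n) (Fin n) ℝ) := T.2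
  simp only [_root_.IsSelfAdjoint, Matrix.star_eq_conjTranspose,
    Matrix.conjTranspose_eq_transpose_of_trivial] at hT
  conv_lhs => rw [← hT]
  rfl

private abbrev SymmIdx (n : ℕ) := {p : Fin n × Fin n // p.1 ≤ p.2}

private def ofCoord {n : ℕ} (g : SymmIdx n → ℝ) : Matrix (Fin n) (Fin n) ℝ :=
  fun i j => if h : i ≤ j then g ⟨(i, j), h⟩ else g ⟨(j, i), le_of_not_ge h⟩

private lemma ofCoord_mem {n : ℕ} (g : SymmIdx n → ℝ) :
    ofCoord g ∈ selfAdjoint (Matrix (Fin n) (Fin n) ℝ) := by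
  rw [selfAdjoint.mem_iff]
  simp only [Matrix.star_eq_conjTranspose, Matrix.conjTranspose_eq_transpose_of_trivial]
  ext i j
  simp only [Matrix.transpose_apply, ofCoord]
  split_ifs with h1 h2 h2
  · have : i = j := le_antisymm h2 h1
    subst this; rfl
  · rfl
  · rfl
  · exact absurd (le_total j i) (by simp [h1, h2])

private noncomputable def symmEquiv {n : ℕ} :
    selfAdjoint (Matrix (Fin n) (Fin n) ℝ) ≃ₗ[ℝ] (SymmIdx n → ℝ) where
  toFun T p := (T : Matrix (Fin n) (Fin n) ℝ) p.1.1 p.1.2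
  map_add' T S := by ext p; rfl
  map_smul' c T := by ext p; rfl
  invFun g := ⟨ofCoord g, ofCoord_mem g⟩
  left_inv T := by
    apply Subtype.ext
    ext i j
    by_cases h : i ≤ j
    · simp [ofCoord, h]
    · simp [ofCoord, h, symm_entry]
  right_inv g := by
    ext p
    simp only [ofCoord, dif_pos p.2]

private noncomputable def symmBasis {n : ℕ} :
    Module.Basis (SymmIdx n) ℝ (selfAdjoint (Matrix (Fin n) (Fin n) ℝ)) :=
  Module.Basis.ofEquivFun symmEquiv

private lemma congMap_diagonal_toMatrix {n : ℕ} (d : Fin n → ℝ) :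
    LinearMap.toMatrix symmBasis symmBasis (congMap (Matrix.diagonal d)) =
      Matrix.diagonal (fun p : SymmIdx n => d p.1.1 * d p.1.2) := by
  ext q p
  rw [LinearMap.toMatrix_apply]
  have hrepr : ∀ x, (symmBasis (n := n)).repr x q = symmEquiv x q := fun x =>
    Module.Basis.ofEquivFun_repr_apply _ _ _
  have hb : symmBasis (n := n) p = symmEquiv.symm (Pi.single p 1) := by
    rw [symmBasis, Module.Basis.coe_ofEquivFun]
  rw [hrepr, hb]
  show ((Matrix.diagonal d)ᵀ * (ofCoord (Pi.single p 1) : Matrix (Fin n) (Fin n) ℝ) *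
      Matrix.diagonal d) q.1.1 q.1.2 = _
  rw [Matrix.diagonal_transpose, Matrix.mul_diagonal, Matrix.diagonal_mul]
  simp only [ofCoord, dif_pos q.2]
  rw [Pi.single_apply]
  by_cases h : q = p
  · subst h
    simp [Matrix.diagonal_apply_eq, mul_comm]
  · simp [h, Matrix.diagonal_apply_ne _ h]

private lemma prod_symmIdx (n : ℕ) (d : Fin n → ℝ) :
    ∏ p : SymmIdx n, d p.1.1 * d p.1.2 = (∏ i, d i) ^ (n + 1) := by
  rw [← Finset.prod_subtype (Finset.univ.filter (fun p : Fin n × Fin n => p.1 ≤ p.2))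
    (by simp) (fun p => d p.1 * d p.2)]
  rw [Finset.prod_filter]
  rw [Fintype.prod_prod_type]
  have h1 : ∀ i : Fin n, (∏ j, if i ≤ j then d i * d j else 1) =
      d i ^ (n - (i : ℕ)) * ∏ j ∈ Finset.Ici i, d j := by
    intro i
    rw [← Finset.prod_filter]
    have : Finset.univ.filter (fun j => i ≤ j) = Finset.Ici i := by
      ext j; simp
    rw [this, Finset.prod_mul_distrib, Finset.prod_const, Fin.card_Ici]
  simp_rw [h1]
  rw [Finset.prod_mul_distrib]
  have h2 : (∏ i : Fin n, ∏ j ∈ Finset.Ici i, d j) = ∏ j : Fin n, d j ^ ((j : ℕ) + 1) := by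
    rw [Finset.prod_comm' (t' := Finset.univ) (s' := fun j => Finset.Iic j) (by simp)]
    simp [Finset.prod_const, Fin.card_Iic]
  rw [h2, ← Finset.prod_mul_distrib, ← Finset.prod_pow]
  apply Finset.prod_congr rfl
  intro i _
  rw [← pow_add]
  congr 1
  omega

private lemma congMap_diagonal_det {n : ℕ} (d : Fin n → ℝ) :
    LinearMap.det (congMap (Matrix.diagonal d)) = (Matrix.diagonal d).det ^ (n + 1) := by
  rw [← LinearMap.det_toMatrix symmBasis, congMap_diagonal_toMatrix, Matrix.det_diagonal,
    prod_symmIdx, Matrix.det_diagonal]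

private lemma congMap_one_det {n : ℕ} :
    LinearMap.det (congMap (1 : Matrix (Fin n) (Fin n) ℝ)) = 1 := by
  rw [← Matrix.diagonal_one, congMap_diagonal_det]
  simp

private lemma diag_conj {n : ℕ} (i j : Fin n) (hij : i ≠ j) (c : ℝ) :
    Matrix.diagonal (fun k => if k = i then (-1 : ℝ) else 1) * Matrix.transvection i j c *
      Matrix.diagonal (fun k => if k = i then (-1 : ℝ) else 1) = Matrix.transvection i j (-c) := by
  ext a b
  rw [Matrix.mul_diagonal, Matrix.diagonal_mul]
  simp only [Matrix.transvection, Matrix.add_apply, Matrix.one_apply, Matrix.single]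
  split_ifs <;> simp_all <;> split_ifs <;> simp_all

private lemma congMap_transvection_det {n : ℕ} (i j : Fin n) (hij : i ≠ j) (c : ℝ) :
    LinearMap.det (congMap (Matrix.transvection i j c)) = 1 := by
  have hDdet : LinearMap.det
      (congMap (Matrix.diagonal (fun k => if k = i then (-1 : ℝ) else 1))) ^ 2 = 1 := by
    rw [congMap_diagonal_det, ← pow_mul, mul_comm, pow_mul, Matrix.det_diagonal,
      ← Finset.prod_pow]
    have : ∀ k : Fin n, (if k = i then (-1 : ℝ) else 1) ^ 2 = 1 := by
      intro k; split_ifs <;> norm_num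
    simp [this]
  have key : ∀ e : ℝ, LinearMap.det (congMap (Matrix.transvection i j (-e))) =
      LinearMap.det (congMap (Matrix.transvection i j e)) := by
    intro e
    rw [← diag_conj i j hij e, congMap_det_mul, congMap_det_mul]
    linear_combination LinearMap.det (congMap (Matrix.transvection i j e)) * hDdet
  have hsq : LinearMap.det (congMap (Matrix.transvection i j c)) ^ 2 = 1 := by
    have := congMap_det_mul (Matrix.transvection i j c) (Matrix.transvection i j (-c))
    rw [Matrix.transvection_mul_transvection_same _ _ hij, add_neg_cancel,
      Matrix.transvection_zero, congMap_one_det, key] at this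
    rw [sq]
    exact this.symm
  have hpos : LinearMap.det (congMap (Matrix.transvection i j c)) =
      LinearMap.det (congMap (Matrix.transvection i j (c / 2))) ^ 2 := by
    have := congMap_det_mul (Matrix.transvection i j (c / 2)) (Matrix.transvection i j (c / 2))
    rw [Matrix.transvection_mul_transvection_same _ _ hij, add_halves] at this
    rw [sq]
    exact this
  nlinarith [hsq, hpos, sq_nonneg (LinearMap.det (congMap (Matrix.transvection i j (c / 2))))]

private lemma congMap_det {n : ℕ} (A : Matrix (Fin n) (Fin n) ℝ) :
    LinearMap.det (congMap A) = A.det ^ (n + 1) := by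
  apply Matrix.diagonal_transvection_induction
    (fun M => LinearMap.det (congMap M) = M.det ^ (n + 1)) A
  · intro D _
    exact congMap_diagonal_det D
  · intro t
    rw [TransvectionStruct.toMatrix, congMap_transvection_det _ _ t.hij,
      Matrix.det_transvection_of_ne _ _ t.hij, one_pow]
  · intro M N hM hN
    rw [congMap_det_mul, hM, hN, Matrix.det_mul, mul_pow]

theorem det_congruence_symm (n : ℕ) (A : Matrix (Fin n) (Fin n) ℝ) (hA : A.det ≠ 0)
    (f : (selfAdjoint (Matrix (Fin n) (Fin n) ℝ)) →ₗ[ℝ]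
         (selfAdjoint (Matrix (Fin n) (Fin n) ℝ)))
    (hf : ∀ T, (f T : Matrix (Fin n) (Fin n) ℝ) = Aᵀ * (T : Matrix (Fin n) (Fin n) ℝ) * A) :
    LinearMap.det f = A.det ^ (n + 1) := by
  have : f = congMap A := by
    apply LinearMap.ext
    intro T
    apply Subtype.ext
    rw [hf]
    rfl
  rw [this, congMap_det]
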